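/- Let {W_j} (j ∈ ℕ) be Bloch subdomains of the unit disc D such that there exists C > 0 with Bloch radius R(W_j) < C for all j. If {g_j} is a sequence of holomorphic self-maps of D with g_j(D) ⊆ W_j for all j, then every limit (in the compact-open topology) of the iterated function system {g_j ∘ ⋯ ∘ g_1} is a constant map. -/

import Mathlib

open Metric Set Filter
open scoped ENNReal NNReal

noncomputable section

/-- The open unit disc in `ℂ`. -/
def uDisc : Set ℂ := Metric.ball 0 1

/-- The inverse hyperbolic tangent. -/
def artanh (x : ℝ) : ℝ := Real.log ((1 + x) / (1 - x)) / 2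

/-- The Poincaré (hyperbolic) distance on the unit disc. -/
def pDist (ζ η : ℂ) : ℝ :=
  artanh ‖(ζ - η) / (1 - (starRingEnd ℂ) ζ * η)‖

/-- Hyperbolic ball in the unit disc. -/
def hBall (z : ℂ) (r : ℝ) : Set ℂ := {w ∈ uDisc | pDist w z < r}

/-- Bloch radius of a subset of the unit disc. -/
def blochRadiusD (U : Set ℂ) : ℝ≥0∞ :=
  ⨆ (r : NNReal) (_ : ∃ z ∈ uDisc, hBall z (r : ℝ) ⊆ U), (r : ℝ≥0∞)

/-- `tanh` extended to `ℝ≥0∞`, with `tanh ∞ = 1`. -/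
def tanhE (x : ℝ≥0∞) : ℝ := if x = ⊤ then 1 else Real.tanh x.toReal

variable {E : Type*} [NormedAddCommGroup E] [NormedSpace ℂ E]

/-- Admissible values for the Lempert function of `D` between `z` and `w`. -/
def lemSet (D : Set E) (z w : E) : Set ℝ :=
  {c | ∃ (f : ℂ → E) (ζ : ℂ), DifferentiableOn ℂ f uDisc ∧ MapsTo f uDisc D ∧
    f 0 = z ∧ ζ ∈ uDisc ∧ f ζ = w ∧ c = pDist 0 ζ}

/-- The Kobayashi (pseudo)distance of `D`, defined via chains of analytic discs. -/
def kDist (D : Set E) (z w : E) : ℝ :=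
  sInf {s | ∃ (m : ℕ) (p : ℕ → E), p 0 = z ∧ p m = w ∧ (∀ i, i ≤ m → p i ∈ D) ∧
      s = ∑ i ∈ Finset.range m, sInf (lemSet D (p i) (p (i + 1)))}

/-- Kobayashi ball of center `z` and radius `r` in `D`. -/
def kBall (D : Set E) (z : E) (r : ℝ) : Set E := {w ∈ D | kDist D w z < r}

/-- Bloch radius of `X ⊆ D` with respect to the Kobayashi distance of `D`. -/
def blochRadius (D X : Set E) : ℝ≥0∞ :=
  ⨆ (r : NNReal) (_ : ∃ z ∈ D, kBall D z (r : ℝ) ⊆ X), (r : ℝ≥0∞)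

/-- The Kobayashi infinitesimal (pseudo)metric of `D`. -/
def kMetric (D : Set E) (z v : E) : ℝ :=
  sInf {c | ∃ (f : ℂ → E) (r : ℝ), DifferentiableOn ℂ f uDisc ∧ MapsTo f uDisc D ∧
    f 0 = z ∧ 0 < r ∧ deriv f 0 = r • v ∧ c = 1 / r}

/-- The hyperbolic Lipschitz constant `μ_D(X)` of `X` inside `D`. -/
def lipConst (D X : Set E) : ℝ :=
  sSup {t | ∃ z ∈ X, ∃ v : E, v ≠ 0 ∧ t = kMetric D z v / kMetric X z v}

/-- `comps f j = f j ∘ ⋯ ∘ f 0`, the iterated function system associated to `f`. -/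
def comps (f : ℕ → E → E) : ℕ → E → E
  | 0 => f 0
  | (j + 1) => f (j + 1) ∘ comps f j

/-- `F` is a limit, in the compact-open topology on `D`, of a subsequence of the
iterated function system associated to `f`. -/
def IFSLimit (D : Set E) (f : ℕ → E → E) (F : E → E) : Prop :=
  ∃ s : ℕ → ℕ, StrictMono s ∧
    TendstoLocallyUniformlyOn (fun j => comps f (s j)) F atTop D

/-- `X ⊆ D` is degenerate in `D`: every limit of every iterated function system of
holomorphic self-maps of `D` with image in `X` is constant. -/
def Degenerate (D X : Set E) : Prop :=
  ∀ f : ℕ → E → E, (∀ j, DifferentiableOn ℂ (f j) D ∧ MapsTo (f j) D X) →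
    ∀ F : E → E, IFSLimit D f F → ∃ c, ∀ z ∈ D, F z = c

/-- A complex geodesic of `D`: a holomorphic isometry from the Poincaré distance of
the unit disc to the Kobayashi distance of `D`. -/
def IsComplexGeodesic (D : Set E) (φ : ℂ → E) : Prop :=
  DifferentiableOn ℂ φ uDisc ∧ MapsTo φ uDisc D ∧
    ∀ ζ ∈ uDisc, ∀ η ∈ uDisc, kDist D (φ ζ) (φ η) = pDist ζ η

/-- A Lempert projection associated to the complex geodesic `φ`: a holomorphic
retraction of `D` onto `φ(𝔻)` with affine fibers. -/
def IsLempertProjection (D : Set E) (φ : ℂ → E) (ρ : E → E) : Prop :=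
  DifferentiableOn ℂ ρ D ∧ MapsTo ρ D (φ '' uDisc) ∧
    (∀ z ∈ D, ρ (ρ z) = ρ z) ∧ (∀ ζ ∈ uDisc, ρ (φ ζ) = φ ζ) ∧
    ∀ ζ ∈ uDisc, ∃ (L : E →ₗ[ℂ] ℂ) (c : ℂ), L ≠ 0 ∧
      {w ∈ D | ρ w = φ ζ} = {w ∈ D | L w = c}

/-- A Lempert projection device `(φ, ρ, ρ̃)`: a complex geodesic, an associated
Lempert projection, and the left inverse `ρ̃ = φ⁻¹ ∘ ρ`. -/
def IsLempertDevice (D : Set E) (φ : ℂ → E) (ρ : E → E) (ρt : E → ℂ) : Prop :=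
  IsComplexGeodesic D φ ∧ IsLempertProjection D φ ρ ∧
    ∀ z ∈ D, ρt z ∈ uDisc ∧ φ (ρt z) = ρ z

/-- `X` is 1-Bloch in `D`: there is `C > 0` such that for every Lempert projection
device, `ρ̃(X)` is contained in a Bloch subdomain of the disc of Bloch radius `< C`. -/
def OneBloch (D X : Set E) : Prop :=
  ∃ C > (0 : ℝ), ∀ (φ : ℂ → E) (ρ : E → E) (ρt : E → ℂ),
    IsLempertDevice D φ ρ ρt → ∃ U : Set ℂ, IsOpen U ∧ IsConnected U ∧ U ⊆ uDisc ∧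
      ρt '' X ⊆ U ∧ blochRadiusD U < ENNReal.ofReal C

/-- `X` is c-Bloch in `D`: there is `C > 0` such that for every Lempert projection
device, `ρ̃(X ∩ φ(𝔻))` is contained in a Bloch subdomain of Bloch radius `≤ C`. -/
def CBloch (D X : Set E) : Prop :=
  ∃ C > (0 : ℝ), ∀ (φ : ℂ → E) (ρ : E → E) (ρt : E → ℂ),
    IsLempertDevice D φ ρ ρt → ∃ U : Set ℂ, IsOpen U ∧ IsConnected U ∧ U ⊆ uDisc ∧
      ρt '' (X ∩ φ '' uDisc) ⊆ U ∧ blochRadiusD U ≤ ENNReal.ofReal C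


/-- compatibility: the complex absolute value as an `AbsoluteValue`. -/
def Complex.abs : AbsoluteValue ℂ ℝ := IsAbsoluteValue.toAbsoluteValue (norm : ℂ → ℝ)

@[simp] theorem Complex.norm_eq_abs (z : ℂ) : ‖z‖ = Complex.abs z := rfl

theorem Complex.sq_abs (z : ℂ) : Complex.abs z ^ 2 = Complex.normSq z := Complex.sq_norm z

@[simp] theorem Complex.abs_conj (z : ℂ) : Complex.abs ((starRingEnd ℂ) z) = Complex.abs z :=
  Complex.norm_conj z

theorem Complex.abs_re_le_abs (z : ℂ) : |z.re| ≤ Complex.abs z := Complex.abs_re_le_norm z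

theorem Complex.abs_le_abs_of_mapsTo_ball_self {f : ℂ → ℂ} {R : ℝ} {z : ℂ}
    (hd : DifferentiableOn ℂ f (Metric.ball 0 R)) (h_maps : MapsTo f (Metric.ball 0 R) (Metric.ball 0 R))
    (h₀ : f 0 = 0) (hz : Complex.abs z < R) : Complex.abs (f z) ≤ Complex.abs z :=
  Complex.norm_le_norm_of_mapsTo_ball hd (h_maps.mono_right Metric.ball_subset_closedBall) h₀ hz




namespace StmtAux

open scoped Topology

/-- pseudo-hyperbolic distance -/
def rho (z w : ℂ) : ℝ :=
  Complex.abs (z - w) / Complex.abs (1 - (starRingEnd ℂ) z * w)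

lemma mem_uDisc {z : ℂ} : z ∈ uDisc ↔ Complex.abs z < 1 := by
  simp [uDisc, Metric.mem_ball, Complex.dist_eq]

lemma isOpen_uDisc : IsOpen uDisc := isOpen_ball

lemma sq_identity (z w : ℂ) :
    Complex.abs (1 - (starRingEnd ℂ) z * w) ^ 2 - Complex.abs (z - w) ^ 2
      = (1 - Complex.abs z ^ 2) * (1 - Complex.abs w ^ 2) := by
  simp only [Complex.sq_abs, Complex.normSq_apply, Complex.sub_re, Complex.sub_im,
    Complex.mul_re, Complex.mul_im, Complex.one_re, Complex.one_im,
    Complex.conj_re, Complex.conj_im]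
  ring

lemma den_pos {z w : ℂ} (hz : Complex.abs z < 1) (hw : Complex.abs w < 1) :
    0 < Complex.abs (1 - (starRingEnd ℂ) z * w) := by
  have h := sq_identity z w
  have p1 : 0 < 1 - Complex.abs z ^ 2 := by nlinarith [Complex.abs.nonneg z]
  have p2 : 0 < 1 - Complex.abs w ^ 2 := by nlinarith [Complex.abs.nonneg w]
  have h2 := Complex.abs.nonneg (z - w)
  have h3 := Complex.abs.nonneg (1 - (starRingEnd ℂ) z * w)
  have hsq : 0 < Complex.abs (1 - (starRingEnd ℂ) z * w) ^ 2 := by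
    nlinarith [mul_pos p1 p2, sq_nonneg (Complex.abs (z - w))]
  rcases h3.lt_or_eq with h4 | h4
  · exact h4
  · exfalso; rw [← h4] at hsq; simp at hsq

lemma den_ne {z w : ℂ} (hz : Complex.abs z < 1) (hw : Complex.abs w < 1) :
    (1 - (starRingEnd ℂ) z * w) ≠ 0 := by
  intro h
  have := den_pos hz hw
  rw [h] at this
  simp at this

lemma abs_lt_den {z w : ℂ} (hz : Complex.abs z < 1) (hw : Complex.abs w < 1) :
    Complex.abs (z - w) < Complex.abs (1 - (starRingEnd ℂ) z * w) := by
  have h := sq_identity z w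
  have p1 : 0 < 1 - Complex.abs z ^ 2 := by nlinarith [Complex.abs.nonneg z]
  have p2 : 0 < 1 - Complex.abs w ^ 2 := by nlinarith [Complex.abs.nonneg w]
  have h3 := Complex.abs.nonneg (1 - (starRingEnd ℂ) z * w)
  have hlt : Complex.abs (z - w) ^ 2 < Complex.abs (1 - (starRingEnd ℂ) z * w) ^ 2 := by
    nlinarith [mul_pos p1 p2]
  exact lt_of_pow_lt_pow_left₀ 2 h3 hlt

lemma rho_nonneg (z w : ℂ) : 0 ≤ rho z w :=
  div_nonneg (Complex.abs.nonneg _) (Complex.abs.nonneg _)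

lemma rho_lt_one {z w : ℂ} (hz : Complex.abs z < 1) (hw : Complex.abs w < 1) :
    rho z w < 1 :=
  (div_lt_one (den_pos hz hw)).2 (abs_lt_den hz hw)

lemma abs_den_comm (z w : ℂ) :
    Complex.abs (1 - (starRingEnd ℂ) z * w) = Complex.abs (1 - (starRingEnd ℂ) w * z) := by
  rw [← Complex.abs_conj (1 - (starRingEnd ℂ) z * w)]
  congr 1
  simp [map_sub, map_mul, mul_comm]

lemma rho_symm (z w : ℂ) : rho z w = rho w z := by
  unfold rho
  rw [Complex.abs.map_sub, abs_den_comm]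

lemma rho_self (z : ℂ) : rho z z = 0 := by simp [rho]

lemma rho_zero_right (z : ℂ) : rho z 0 = Complex.abs z := by simp [rho]

lemma rho_neg_right (z w : ℂ) :
    rho z (-w) = Complex.abs (z + w) / Complex.abs (1 + (starRingEnd ℂ) z * w) := by
  unfold rho
  rw [sub_neg_eq_add]
  congr 2
  ring
/-- Möbius automorphism of the disc sending `a` to `0`. -/
def mob (a z : ℂ) : ℂ := (z - a) / (1 - (starRingEnd ℂ) a * z)

lemma abs_mob {a z : ℂ} (ha : Complex.abs a < 1) (hz : Complex.abs z < 1) :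
    Complex.abs (mob a z) = rho z a := by
  unfold mob rho
  rw [map_div₀, abs_den_comm z a]

lemma mob_mem {a z : ℂ} (ha : Complex.abs a < 1) (hz : Complex.abs z < 1) :
    Complex.abs (mob a z) < 1 := by
  rw [abs_mob ha hz]; exact rho_lt_one hz ha

lemma mob_self (a : ℂ) : mob a a = 0 := by simp [mob]

lemma mob_differentiableOn {a : ℂ} (ha : Complex.abs a < 1) :
    DifferentiableOn ℂ (mob a) uDisc := by
  apply DifferentiableOn.div
  · exact (differentiableOn_id.sub (differentiableOn_const a))
  · exact (differentiableOn_const _).sub ((differentiableOn_const _).mul differentiableOn_id)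
  · intro z hz
    exact den_ne ha (mem_uDisc.1 hz)

lemma mob_mapsTo {a : ℂ} (ha : Complex.abs a < 1) : MapsTo (mob a) uDisc uDisc :=
  fun z hz => mem_uDisc.2 (mob_mem ha (mem_uDisc.1 hz))

lemma mob_inv {a z : ℂ} (ha : Complex.abs a < 1) (hz : Complex.abs z < 1) :
    mob (-a) (mob a z) = z := by
  have h1 : (1 - (starRingEnd ℂ) a * z) ≠ 0 := den_ne ha hz
  have h2 : (1 : ℂ) - (starRingEnd ℂ) a * a ≠ 0 := den_ne ha ha
  unfold mob
  rw [map_neg, neg_mul, sub_neg_eq_add, sub_neg_eq_add]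
  have key : 1 + (starRingEnd ℂ) a * ((z - a) / (1 - (starRingEnd ℂ) a * z))
      = (1 - (starRingEnd ℂ) a * a) / (1 - (starRingEnd ℂ) a * z) := by
    field_simp
    ring
  have h3 : 1 + (starRingEnd ℂ) a * ((z - a) / (1 - (starRingEnd ℂ) a * z)) ≠ 0 := by
    rw [key]; exact div_ne_zero h2 h1
  rw [div_eq_iff h3]
  rw [key, div_add' _ _ _ h1, mul_div_assoc', div_left_inj' h1]
  ring

lemma mob_sub (a x y : ℂ) (ha : Complex.abs a < 1) (hx : Complex.abs x < 1)
    (hy : Complex.abs y < 1) :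
    mob a x - mob a y
      = (x - y) * (1 - (starRingEnd ℂ) a * a)
        / ((1 - (starRingEnd ℂ) a * x) * (1 - (starRingEnd ℂ) a * y)) := by
  have h1 := den_ne ha hx
  have h2 := den_ne ha hy
  unfold mob
  rw [div_sub_div _ _ h1 h2]
  congr 1
  ring

lemma mob_one_sub (a x y : ℂ) (ha : Complex.abs a < 1) (hx : Complex.abs x < 1)
    (hy : Complex.abs y < 1) :
    1 - (starRingEnd ℂ) (mob a x) * mob a y
      = (1 - (starRingEnd ℂ) x * y) * (1 - a * (starRingEnd ℂ) a)
        / ((1 - a * (starRingEnd ℂ) x) * (1 - (starRingEnd ℂ) a * y)) := by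
  have h1 := den_ne ha hy
  have h1' : (1 : ℂ) - a * (starRingEnd ℂ) x ≠ 0 := by
    intro h
    have h' := congrArg (starRingEnd ℂ) h
    simp only [map_sub, map_mul, map_one, map_zero, Complex.conj_conj] at h'
    exact den_ne ha hx h'
  unfold mob
  rw [map_div₀, map_sub, map_sub, map_mul, Complex.conj_conj, map_one]
  rw [div_mul_div_comm, one_sub_div (mul_ne_zero h1' h1)]
  congr 1
  ring

lemma rho_mob_eq {a x y : ℂ} (ha : Complex.abs a < 1) (hx : Complex.abs x < 1)
    (hy : Complex.abs y < 1) :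
    rho (mob a x) (mob a y) = rho x y := by
  have hax := den_ne ha hx
  have hay := den_ne ha hy
  have hax' : (1 : ℂ) - a * (starRingEnd ℂ) x ≠ 0 := by
    intro h
    have h' := congrArg (starRingEnd ℂ) h
    simp only [map_sub, map_mul, map_one, map_zero, Complex.conj_conj] at h'
    exact hax h'
  have haa : (1 : ℂ) - (starRingEnd ℂ) a * a ≠ 0 := den_ne ha ha
  have haa' : (1 : ℂ) - a * (starRingEnd ℂ) a ≠ 0 := by
    rwa [mul_comm] at haa
  unfold rho
  rw [mob_sub a x y ha hx hy, mob_one_sub a x y ha hx hy]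
  rw [map_div₀, map_div₀, map_mul, map_mul, map_mul, map_mul]
  have e1 : Complex.abs (1 - a * (starRingEnd ℂ) x) = Complex.abs (1 - (starRingEnd ℂ) a * x) := by
    rw [← Complex.abs_conj (1 - a * (starRingEnd ℂ) x)]
    congr 1; simp [map_sub, map_mul, mul_comm]
  have e2 : Complex.abs (1 - a * (starRingEnd ℂ) a) = Complex.abs (1 - (starRingEnd ℂ) a * a) := by
    rw [mul_comm]
  rw [e1, e2]
  have d1 : Complex.abs (1 - (starRingEnd ℂ) a * x) ≠ 0 := (den_pos ha hx).ne'
  have d2 : Complex.abs (1 - (starRingEnd ℂ) a * y) ≠ 0 := (den_pos ha hy).ne'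
  have d3 : Complex.abs (1 - (starRingEnd ℂ) a * a) ≠ 0 := (den_pos ha ha).ne'
  have d4 : Complex.abs (1 - (starRingEnd ℂ) x * y) ≠ 0 := (den_pos hx hy).ne'
  rw [div_div_div_cancel_right₀ (mul_ne_zero d1 d2), mul_div_mul_right _ _ d3]
/-- auxiliary combination function -/
def m (p q : ℝ) : ℝ := (p + q) / (1 + p * q)

lemma m_denom_pos {p q : ℝ} (hp : 0 ≤ p) (hq : 0 ≤ q) : 0 < 1 + p * q := by nlinarith

lemma m_nonneg {p q : ℝ} (hp : 0 ≤ p) (hq : 0 ≤ q) : 0 ≤ m p q :=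
  div_nonneg (by linarith) (m_denom_pos hp hq).le

lemma m_lt_one {p q : ℝ} (hp : 0 ≤ p) (hp1 : p < 1) (hq : 0 ≤ q) (hq1 : q < 1) :
    m p q < 1 := by
  rw [m, div_lt_one (m_denom_pos hp hq)]
  nlinarith

lemma m_mono_left {p p' q : ℝ} (hp : 0 ≤ p) (hpp : p ≤ p') (hp1 : p' ≤ 1)
    (hq : 0 ≤ q) (hq1 : q ≤ 1) : m p q ≤ m p' q := by
  rw [m, m, div_le_div_iff₀ (m_denom_pos hp hq) (m_denom_pos (hp.trans hpp) hq)]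
  nlinarith [mul_nonneg (sub_nonneg.2 hpp) (by nlinarith : (0:ℝ) ≤ 1 - q ^ 2)]
  
lemma m_mono_right {p q q' : ℝ} (hq : 0 ≤ q) (hqq : q ≤ q') (hq1 : q' ≤ 1)
    (hp : 0 ≤ p) (hp1 : p ≤ 1) : m p q ≤ m p q' := by
  rw [m, m, div_le_div_iff₀ (m_denom_pos hp hq) (m_denom_pos hp (hq.trans hqq))]
  nlinarith [mul_nonneg (sub_nonneg.2 hqq) (by nlinarith : (0:ℝ) ≤ 1 - p ^ 2)]

/-- Triangle inequality through 0 for the pseudo-hyperbolic distance. -/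
lemma rho_triangle0 {x y : ℂ} (hx : Complex.abs x < 1) (hy : Complex.abs y < 1) :
    rho x y ≤ m (Complex.abs x) (Complex.abs y) := by
  have hxn := Complex.abs.nonneg x
  have hyn := Complex.abs.nonneg y
  rw [rho, m, div_le_div_iff₀ (den_pos hx hy) (m_denom_pos hxn hyn)]
  -- reduce to squared inequality
  have key : Complex.abs (x - y) ^ 2 * (1 + Complex.abs x * Complex.abs y) ^ 2
      ≤ (Complex.abs x + Complex.abs y) ^ 2 * Complex.abs (1 - (starRingEnd ℂ) x * y) ^ 2 := by
    have e1 : Complex.abs (x - y) ^ 2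
        = Complex.abs x ^ 2 + Complex.abs y ^ 2 - 2 * ((starRingEnd ℂ) x * y).re := by
      simp only [Complex.sq_abs, Complex.normSq_apply, Complex.sub_re, Complex.sub_im,
        Complex.mul_re, Complex.mul_im, Complex.conj_re, Complex.conj_im]
      ring
    have e2 : Complex.abs (1 - (starRingEnd ℂ) x * y) ^ 2
        = 1 + Complex.abs x ^ 2 * Complex.abs y ^ 2 - 2 * ((starRingEnd ℂ) x * y).re := by
      simp only [Complex.sq_abs, Complex.normSq_apply, Complex.sub_re, Complex.sub_im,
        Complex.mul_re, Complex.mul_im, Complex.conj_re, Complex.conj_im,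
        Complex.one_re, Complex.one_im]
      ring
    have e3 : |((starRingEnd ℂ) x * y).re| ≤ Complex.abs x * Complex.abs y := by
      calc |((starRingEnd ℂ) x * y).re| ≤ Complex.abs ((starRingEnd ℂ) x * y) :=
            Complex.abs_re_le_abs _
        _ = Complex.abs x * Complex.abs y := by rw [map_mul, Complex.abs_conj]
    have e3' := abs_le.1 e3
    have f1 : (0:ℝ) ≤ 1 - Complex.abs x ^ 2 := by nlinarith
    have f2 : (0:ℝ) ≤ 1 - Complex.abs y ^ 2 := by nlinarith
    have hX1 : (0:ℝ) ≤ ((starRingEnd ℂ) x * y).re + Complex.abs x * Complex.abs y := by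
      linarith [e3'.1]
    rw [e1, e2]
    nlinarith [mul_nonneg (mul_nonneg hX1 f1) f2]
  have h2 : 0 ≤ (Complex.abs x + Complex.abs y) * Complex.abs (1 - (starRingEnd ℂ) x * y) :=
    mul_nonneg (by linarith) (Complex.abs.nonneg _)
  have key' : (Complex.abs (x - y) * (1 + Complex.abs x * Complex.abs y)) ^ 2
      ≤ ((Complex.abs x + Complex.abs y) * Complex.abs (1 - (starRingEnd ℂ) x * y)) ^ 2 := by
    rw [mul_pow, mul_pow]; exact key
  exact le_of_pow_le_pow_left₀ two_ne_zero h2 key'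

/-- General triangle inequality for the pseudo-hyperbolic distance. -/
lemma rho_triangle {x y z : ℂ} (hx : Complex.abs x < 1) (hy : Complex.abs y < 1)
    (hz : Complex.abs z < 1) : rho x z ≤ m (rho x y) (rho y z) := by
  have h1 : rho x z = rho (mob y x) (mob y z) := (rho_mob_eq hy hx hz).symm
  have h2 := rho_triangle0 (mob_mem hy hx) (mob_mem hy hz)
  rw [abs_mob hy hx, abs_mob hy hz] at h2
  rw [h1]
  calc rho (mob y x) (mob y z) ≤ m (rho x y) (rho z y) := h2
    _ = m (rho x y) (rho y z) := by rw [rho_symm z y]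

/-- Bound for `rho x (-y)` through 0. -/
lemma rho_neg_le {x y : ℂ} (hx : Complex.abs x < 1) (hy : Complex.abs y < 1) :
    rho x (-y) ≤ m (Complex.abs x) (Complex.abs y) := by
  have := rho_triangle0 hx (show Complex.abs (-y) < 1 by rwa [map_neg_eq_map])
  rwa [map_neg_eq_map] at this

/-- The Schwarz--Pick lemma. -/
lemma schwarz_pick {f : ℂ → ℂ} (hd : DifferentiableOn ℂ f uDisc)
    (hm : MapsTo f uDisc uDisc) {x y : ℂ} (hx : Complex.abs x < 1)
    (hy : Complex.abs y < 1) : rho (f x) (f y) ≤ rho x y := by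
  have hfx : Complex.abs (f x) < 1 := mem_uDisc.1 (hm (mem_uDisc.2 hx))
  have hnx : Complex.abs (-x) < 1 := by rwa [map_neg_eq_map]
  set F : ℂ → ℂ := fun ζ => mob (f x) (f (mob (-x) ζ)) with hF
  have hdF : DifferentiableOn ℂ F uDisc := by
    apply DifferentiableOn.comp (mob_differentiableOn hfx)
    · exact DifferentiableOn.comp hd (mob_differentiableOn hnx) (mob_mapsTo hnx)
    · exact fun ζ hζ => hm (mob_mapsTo hnx hζ)
  have hmF : MapsTo F uDisc uDisc :=
    fun ζ hζ => mob_mapsTo hfx (hm (mob_mapsTo hnx hζ))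
  have hF0 : F 0 = 0 := by
    have hx0 : mob (-x) 0 = x := by simp [mob]
    show mob (f x) (f (mob (-x) 0)) = 0
    rw [hx0, mob_self]
  have hball : Complex.abs (mob x y) < 1 := mob_mem hx hy
  have := Complex.abs_le_abs_of_mapsTo_ball_self
    (R := 1) (f := F) hdF hmF hF0 hball
  have hFval : F (mob x y) = mob (f x) (f y) := by
    show mob (f x) (f (mob (-x) (mob x y))) = _
    rw [mob_inv hx hy]
  rw [hFval] at this
  rw [abs_mob hfx (mem_uDisc.1 (hm (mem_uDisc.2 hy))), abs_mob hx hy] at this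
  calc rho (f x) (f y) = rho (f y) (f x) := rho_symm _ _
    _ ≤ rho y x := this
    _ = rho x y := rho_symm _ _
/-- Every holomorphic function on the unit disc has a primitive. -/
lemma exists_primitive {f : ℂ → ℂ} (hf : DifferentiableOn ℂ f uDisc) :
    ∃ P : ℂ → ℂ, ∀ z ∈ uDisc, HasDerivAt P (f z) z := by
  have key : ∀ R : ℝ≥0, 0 < R → (R : ℝ) < 1 →
      HasFPowerSeriesOnBall f (cauchyPowerSeries f 0 R) 0 R := by
    intro R hR0 hR1
    refine DifferentiableOn.hasFPowerSeriesOnBall ?_ hR0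
    apply hf.mono
    intro z hz
    simp only [Metric.mem_closedBall, dist_zero_right] at hz
    exact mem_ball_zero_iff.2 (lt_of_le_of_lt hz hR1)
  set p := cauchyPowerSeries f 0 (1/2 : ℝ≥0) with hp
  have hup : ∀ R : ℝ≥0, 0 < R → (R : ℝ) < 1 → HasFPowerSeriesOnBall f p 0 R := by
    intro R hR0 hR1
    have h1 := key R hR0 hR1
    have h2 := key (1/2) (by norm_num) (by norm_num)
    have : cauchyPowerSeries f 0 R = p :=
      h1.hasFPowerSeriesAt.eq_formalMultilinearSeries h2.hasFPowerSeriesAt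
    rwa [this] at h1
  refine ⟨fun z => ∑' n : ℕ, (p.coeff n / (n + 1)) * z ^ (n + 1), ?_⟩
  intro z hz
  have hz1 : ‖z‖ < 1 := by simpa [Complex.norm_eq_abs] using mem_uDisc.1 hz
  -- choose radii  ‖z‖ < r < r' < 1
  set R : ℝ := max ‖z‖ (1/2) with hRdef
  have hR1 : R < 1 := max_lt hz1 (by norm_num)
  have hR0 : (0:ℝ) < R := lt_max_of_lt_right (by norm_num)
  set r : ℝ≥0 := ⟨(R + 1) / 2, by positivity⟩ with hrdef
  set r' : ℝ≥0 := ⟨(R + 3) / 4, by positivity⟩ with hr'def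
  have hrc : (r : ℝ) = (R + 1) / 2 := rfl
  have hr'c : (r' : ℝ) = (R + 3) / 4 := rfl
  have hrR : R < (r : ℝ) := by rw [hrc]; linarith
  have hrr' : (r : ℝ) < (r' : ℝ) := by rw [hrc, hr'c]; linarith
  have hr'1 : (r' : ℝ) < 1 := by rw [hr'c]; linarith
  have hr1 : (r : ℝ) < 1 := hrr'.trans hr'1
  have hr0 : 0 < r := by
    rw [← NNReal.coe_lt_coe, hrc]; norm_num; linarith
  have hr'0 : 0 < r' := by
    rw [← NNReal.coe_lt_coe, hr'c]; norm_num; linarith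
  have hradius : (r : ℝ≥0∞) < p.radius := by
    calc (r : ℝ≥0∞) < (r' : ℝ≥0∞) := by exact_mod_cast hrr'
      _ ≤ p.radius := (hup r' hr'0 hr'1).r_le
  have hsum : Summable (fun n : ℕ => ‖p n‖ * (r : ℝ) ^ n) :=
    p.summable_norm_mul_pow hradius
  have hzr : z ∈ Metric.ball (0:ℂ) (r : ℝ) :=
    mem_ball_zero_iff.2 ((le_max_left _ _).trans_lt hrR)
  have main := hasDerivAt_tsum_of_isPreconnected hsum
    (Metric.isOpen_ball (x := (0:ℂ)) (ε := (r:ℝ)))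
    ((convex_ball (0:ℂ) (r:ℝ)).isPreconnected)
    (g := fun (n : ℕ) (y : ℂ) => (p.coeff n / (n + 1)) * y ^ (n + 1))
    (g' := fun (n : ℕ) (y : ℂ) => p.coeff n * y ^ n)
    (y₀ := (0:ℂ)) (y := z) ?_ ?_ ?_ ?_ hzr
  · -- identify the sum of derivatives with f z
    convert main using 1
    · rfl
    · rfl
    have hzball : z ∈ Metric.eball (0:ℂ) (r : ℝ≥0) := by
      rw [Metric.eball_coe]; exact hzr
    have hs := (hup r hr0 hr1).hasSum hzball
    simp only [FormalMultilinearSeries.apply_eq_pow_smul_coeff, smul_eq_mul, zero_add] at hs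
    have : f z = ∑' n : ℕ, z ^ n * p.coeff n := hs.tsum_eq.symm
    rw [this]
    exact tsum_congr fun n => mul_comm _ _
  · -- derivative of each term
    intro n y hy
    have hpow := hasDerivAt_pow (n + 1) y
    have := hpow.const_mul (p.coeff n / (n + 1))
    convert this using 1
    have hne : ((n : ℂ) + 1) ≠ 0 := by
      exact Nat.cast_add_one_ne_zero n
    · rfl
    rw [Nat.add_sub_cancel]
    push_cast
    field_simp
  · -- bound on the derivatives
    intro n y hy
    rw [mem_ball_zero_iff] at hy
    rw [norm_mul, norm_pow, FormalMultilinearSeries.norm_apply_eq_norm_coef]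
    exact mul_le_mul_of_nonneg_left
      (pow_le_pow_left₀ (norm_nonneg _) hy.le n) (norm_nonneg _)
  · rw [mem_ball_zero_iff, norm_zero]
    exact_mod_cast hr0
  · -- summable at 0
    exact summable_zero.congr fun n => by simp

/-- A nonvanishing holomorphic function on the unit disc has a holomorphic square root. -/
lemma exists_sqrt {h : ℂ → ℂ} (hd : DifferentiableOn ℂ h uDisc)
    (hne : ∀ z ∈ uDisc, h z ≠ 0) :
    ∃ r : ℂ → ℂ, DifferentiableOn ℂ r uDisc ∧ ∀ z ∈ uDisc, r z ^ 2 = h z := by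
  have h0 : (0:ℂ) ∈ uDisc := by
    rw [mem_uDisc]; simp
  -- the logarithmic derivative has a primitive P
  have hderiv : DifferentiableOn ℂ (deriv h) uDisc :=
    ((hd.analyticOnNhd isOpen_uDisc).deriv).differentiableOn
  have hphi : DifferentiableOn ℂ (fun z => deriv h z / h z) uDisc :=
    hderiv.div hd hne
  obtain ⟨P, hP⟩ := exists_primitive hphi
  -- h * exp (-P) is constant
  have hwderiv : ∀ z ∈ uDisc, HasDerivAt (fun y => h y * Complex.exp (-P y)) 0 z := by
    intro z hz
    have h1 : HasDerivAt h (deriv h z) z :=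
      (hd.differentiableAt (isOpen_uDisc.mem_nhds hz)).hasDerivAt
    have h2 : HasDerivAt P (deriv h z / h z) z := hP z hz
    have h3 : HasDerivAt (fun y => Complex.exp (-P y)) 
        (Complex.exp (-P z) * -(deriv h z / h z)) z := h2.neg.cexp
    have h4 := h1.mul h3
    convert h4 using 1
    · rfl
    · rfl
    · rfl
    field_simp [hne z hz]
    ring
  have hwconst : ∀ z ∈ uDisc, h z * Complex.exp (-P z) = h 0 * Complex.exp (-P 0) := by
    intro z hz
    refine Convex.is_const_of_fderivWithin_eq_zero (𝕜 := ℂ)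
      (f := fun y => h y * Complex.exp (-P y))
      (convex_ball (0:ℂ) 1) ?_ ?_ hz h0
    · intro y hy
      exact ((hwderiv y hy).differentiableAt).differentiableWithinAt
    · intro y hy
      show fderivWithin ℂ (fun y => h y * Complex.exp (-P y)) uDisc y = 0
      rw [fderivWithin_of_isOpen isOpen_uDisc hy]
      have := ((hwderiv y hy).hasFDerivAt).fderiv
      rw [this]
      ext v
      simp
  set c : ℂ := h 0 * Complex.exp (-P 0) with hc
  have hcne : c ≠ 0 := mul_ne_zero (hne 0 h0) (Complex.exp_ne_zero _)
  set b : ℂ := Complex.exp (Complex.log c / 2) with hb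
  have hb2 : b ^ 2 = c := by
    rw [hb, ← Complex.exp_nat_mul]
    have : (2 : ℂ) * (Complex.log c / 2) = Complex.log c := by ring
    rw [show ((2:ℕ) : ℂ) = (2:ℂ) by norm_num, this, Complex.exp_log hcne]
  refine ⟨fun z => b * Complex.exp (P z / 2), ?_, ?_⟩
  · have hPdiff : DifferentiableOn ℂ P uDisc := fun z hz =>
      ((hP z hz).differentiableAt).differentiableWithinAt
    exact ((hPdiff.div_const 2).cexp).const_mul b
  · intro z hz
    have key := hwconst z hz
    have : h z = c * Complex.exp (P z) := by
      have hexp : Complex.exp (-P z) * Complex.exp (P z) = 1 := by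
        rw [← Complex.exp_add]; simp
      calc h z = h z * (Complex.exp (-P z) * Complex.exp (P z)) := by rw [hexp, mul_one]
        _ = (h z * Complex.exp (-P z)) * Complex.exp (P z) := by ring
        _ = c * Complex.exp (P z) := by rw [key]
    rw [mul_pow, hb2, ← Complex.exp_nat_mul, this]
    congr 1
    push_cast
    ring
lemma rho_sq (x y : ℂ) : rho (x ^ 2) (y ^ 2) = rho x y * rho x (-y) := by
  unfold rho
  have n1 : x ^ 2 - y ^ 2 = (x - y) * (x - -y) := by ring
  have n2 : 1 - (starRingEnd ℂ) (x ^ 2) * y ^ 2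
      = (1 - (starRingEnd ℂ) x * y) * (1 - (starRingEnd ℂ) x * -y) := by
    rw [map_pow]; ring
  rw [n1, n2, map_mul, map_mul, div_mul_div_comm]

/-- The key contraction step. -/
lemma step {Wj : Set ℂ} (hWsub : Wj ⊆ uDisc) {t : ℝ} (ht0 : 0 ≤ t) (ht1 : t < 1)
    (hball : ∀ z ∈ uDisc, ∃ q ∈ uDisc, q ∉ Wj ∧ rho q z ≤ t)
    {g : ℂ → ℂ} (hgd : DifferentiableOn ℂ g uDisc) (hgm : MapsTo g uDisc Wj)
    {a b : ℂ} (ha : a ∈ uDisc) (hb : b ∈ uDisc) :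
    rho (g a) (g b)
      ≤ rho a b * m (Real.sqrt t) (m (rho a b) (Real.sqrt t)) := by
  set s : ℝ := Real.sqrt t with hs
  have hs0 : 0 ≤ s := Real.sqrt_nonneg t
  have hst : s ^ 2 = t := Real.sq_sqrt ht0
  have hs1 : s < 1 := by nlinarith
  have haD : Complex.abs a < 1 := mem_uDisc.1 ha
  have hbD : Complex.abs b < 1 := mem_uDisc.1 hb
  have hgaD : Complex.abs (g a) < 1 := mem_uDisc.1 (hWsub (hgm ha))
  have hgbD : Complex.abs (g b) < 1 := mem_uDisc.1 (hWsub (hgm hb))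
  obtain ⟨q, hqD, hqW, hqt⟩ := hball (g a) (hWsub (hgm ha))
  have hq1 : Complex.abs q < 1 := mem_uDisc.1 hqD
  set h : ℂ → ℂ := fun z => mob q (g z) with hh
  have hgm' : MapsTo g uDisc uDisc := fun z hz => hWsub (hgm hz)
  have hdh : DifferentiableOn ℂ h uDisc :=
    (mob_differentiableOn hq1).comp hgd hgm'
  have hmh : ∀ z ∈ uDisc, Complex.abs (h z) < 1 :=
    fun z hz => mob_mem hq1 (mem_uDisc.1 (hgm' hz))
  have hneh : ∀ z ∈ uDisc, h z ≠ 0 := by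
    intro z hz h0
    have hgz : Complex.abs (g z) < 1 := mem_uDisc.1 (hgm' hz)
    rcases div_eq_zero_iff.1 h0 with h1 | h1
    · have hgq : g z = q := sub_eq_zero.1 h1
      exact hqW (hgq ▸ hgm hz)
    · exact den_ne hq1 hgz h1
  obtain ⟨r, hrd, hr2⟩ := exists_sqrt hdh hneh
  have hrD : ∀ z ∈ uDisc, Complex.abs (r z) < 1 := by
    intro z hz
    have h1 : Complex.abs (r z) ^ 2 = Complex.abs (h z) := by
      rw [← map_pow, hr2 z hz]
    have := hmh z hz
    nlinarith [Complex.abs.nonneg (r z)]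
  have hrm : MapsTo r uDisc uDisc := fun z hz => mem_uDisc.2 (hrD z hz)
  set e : ℝ := rho a b with he
  have he0 : 0 ≤ e := rho_nonneg a b
  have he1 : e < 1 := rho_lt_one haD hbD
  have hraD := hrD a ha
  have hrbD := hrD b hb
  -- |r a| ≤ s
  have hra : Complex.abs (r a) ≤ s := by
    have h1 : Complex.abs (r a) ^ 2 = Complex.abs (h a) := by
      rw [← map_pow, hr2 a ha]
    have h2 : Complex.abs (h a) ≤ t := by
      have : Complex.abs (h a) = rho (g a) q := abs_mob hq1 hgaD
      rw [this, rho_symm]; exact hqt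
    nlinarith [Complex.abs.nonneg (r a), hs0]
  -- Schwarz-Pick for r
  have hrr : rho (r a) (r b) ≤ e := schwarz_pick hrd hrm haD hbD
  -- |r b| ≤ m e s
  have hrb : Complex.abs (r b) ≤ m e s := by
    have h1 : rho (r b) (0:ℂ) ≤ m (rho (r b) (r a)) (rho (r a) (0:ℂ)) :=
      rho_triangle hrbD hraD (by simp)
    simp only [rho_zero_right] at h1
    calc Complex.abs (r b) ≤ m (rho (r b) (r a)) (Complex.abs (r a)) := h1
      _ ≤ m e (Complex.abs (r a)) :=
          m_mono_left (rho_nonneg _ _) (by rw [rho_symm]; exact hrr) he1.le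
            (Complex.abs.nonneg _) (hraD.le)
      _ ≤ m e s := m_mono_right (Complex.abs.nonneg _) hra hs1.le he0 he1.le
  -- the splitting
  have hsplit : rho (g a) (g b) = rho (r a) (r b) * rho (r a) (-(r b)) := by
    have e1 : rho (g a) (g b) = rho (h a) (h b) := (rho_mob_eq hq1 hgaD hgbD).symm
    rw [e1, ← hr2 a ha, ← hr2 b hb, rho_sq]
  -- bound the second factor
  have hneg : rho (r a) (-(r b)) ≤ m s (m e s) := by
    calc rho (r a) (-(r b)) ≤ m (Complex.abs (r a)) (Complex.abs (r b)) :=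
          rho_neg_le hraD hrbD
      _ ≤ m s (Complex.abs (r b)) :=
          m_mono_left (Complex.abs.nonneg _) hra hs1.le (Complex.abs.nonneg _) hrbD.le
      _ ≤ m s (m e s) :=
          m_mono_right (Complex.abs.nonneg _) hrb
            (m_lt_one he0 he1 hs0 hs1).le hs0 hs1.le
  rw [hsplit]
  exact mul_le_mul hrr hneg (rho_nonneg _ _) he0
/-- Extraction of an omitted point at bounded pseudo-hyperbolic distance. -/
lemma extract {Wj : Set ℂ} {C : ℝ} (hC : 0 < C)
    (hlt : blochRadiusD Wj < ENNReal.ofReal C) :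
    ∀ z ∈ uDisc, ∃ q ∈ uDisc, q ∉ Wj ∧
      rho q z ≤ (Real.exp (2 * C) - 1) / (Real.exp (2 * C) + 1) := by
  intro z hz
  by_contra hcon
  push_neg at hcon
  -- then the hyperbolic ball of radius C centered at z is contained in Wj
  have hsub : hBall z C ⊆ Wj := by
    intro q hq
    obtain ⟨hqD, hqd⟩ := hq
    by_contra hqW
    have h1 := hcon q hqD hqW
    -- from pDist q z < C deduce rho q z < tanh C
    have hx1 : rho q z < 1 := rho_lt_one (mem_uDisc.1 hqD) (mem_uDisc.1 hz)
    have hx0 : 0 ≤ rho q z := rho_nonneg q z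
    have hpd : Real.log ((1 + rho q z) / (1 - rho q z)) / 2 < C := by
      have : pDist q z = artanh (rho q z) := by
        rw [pDist, norm_div]; rfl
      rw [this] at hqd
      exact hqd
    have h2 : Real.log ((1 + rho q z) / (1 - rho q z)) < 2 * C := by linarith
    have hfrac : (0:ℝ) < (1 + rho q z) / (1 - rho q z) :=
      div_pos (by linarith) (by linarith)
    have h3 : (1 + rho q z) / (1 - rho q z) < Real.exp (2 * C) :=
      (Real.log_lt_iff_lt_exp hfrac).1 h2
    have h4 : 1 + rho q z < Real.exp (2 * C) * (1 - rho q z) :=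
      (div_lt_iff₀ (by linarith)).1 h3
    have h5 : rho q z < (Real.exp (2 * C) - 1) / (Real.exp (2 * C) + 1) := by
      rw [lt_div_iff₀ (by positivity)]
      nlinarith
    linarith
  -- hence the Bloch radius is at least C
  have hge : (C.toNNReal : ℝ≥0∞) ≤ blochRadiusD Wj := by
    apply le_iSup₂ (f := fun (r : NNReal) (_ : ∃ z ∈ uDisc, hBall z (r : ℝ) ⊆ Wj)
      => (r : ℝ≥0∞)) C.toNNReal
    exact ⟨z, hz, by rwa [Real.coe_toNNReal _ hC.le]⟩
  rw [ENNReal.ofReal] at hlt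
  exact absurd (lt_of_le_of_lt hge hlt) (lt_irrefl _)

theorem stmt1 (W : ℕ → Set ℂ)
    (hW : ∀ j, IsOpen (W j) ∧ IsConnected (W j) ∧ W j ⊆ uDisc)
    (C : ℝ) (hC : 0 < C)
    (hWC : ∀ j, blochRadiusD (W j) < ENNReal.ofReal C)
    (g : ℕ → ℂ → ℂ)
    (hg : ∀ j, DifferentiableOn ℂ (g j) uDisc ∧ MapsTo (g j) uDisc (W j))
    (F : ℂ → ℂ) (hF : IFSLimit uDisc g F) :
    ∃ c : ℂ, ∀ z ∈ uDisc, F z = c := by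
  obtain ⟨σ, hσ, hTLU⟩ := hF
  set t : ℝ := (Real.exp (2 * C) - 1) / (Real.exp (2 * C) + 1) with htdef
  have hE1 : (1:ℝ) < Real.exp (2 * C) := by
    rw [show (1:ℝ) = Real.exp 0 by simp]
    exact Real.exp_lt_exp.2 (by linarith)
  have ht0 : 0 ≤ t := by
    rw [htdef]
    apply div_nonneg <;> nlinarith
  have ht1 : t < 1 := by
    rw [htdef, div_lt_one (by nlinarith)]
    nlinarith
  set s : ℝ := Real.sqrt t with hsdef
  have hs0 : 0 ≤ s := Real.sqrt_nonneg t
  have hst : s ^ 2 = t := Real.sq_sqrt ht0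
  have hs1 : s < 1 := by nlinarith
  -- uniform contraction step
  have hstep : ∀ j : ℕ, ∀ x ∈ uDisc, ∀ y ∈ uDisc,
      rho (g j x) (g j y) ≤ rho x y * m s (m (rho x y) s) := by
    intro j x hx y hy
    exact step (hW j).2.2 ht0 ht1 (extract hC (hWC j)) (hg j).1 (hg j).2 hx hy
  -- the iterates stay in the disc
  have hmapsG : ∀ n : ℕ, MapsTo (comps g n) uDisc uDisc := by
    intro n
    induction n with
    | zero => exact fun z hz => (hW 0).2.2 ((hg 0).2 hz)
    | succ n ih => exact fun z hz => (hW (n+1)).2.2 ((hg (n+1)).2 (ih hz))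
  -- main convergence statement: F is constant on the disc
  have key : ∀ z ∈ uDisc, ∀ w ∈ uDisc, F z = F w := by
    intro z hz w hw
    set e : ℕ → ℝ := fun n => rho (comps g n z) (comps g n w) with hedef
    have he0 : ∀ n, 0 ≤ e n := fun n => rho_nonneg _ _
    have he1 : ∀ n, e n < 1 := fun n =>
      rho_lt_one (mem_uDisc.1 (hmapsG n hz)) (mem_uDisc.1 (hmapsG n hw))
    have hrec : ∀ n, e (n+1) ≤ e n * m s (m (e n) s) := by
      intro n
      exact hstep (n+1) _ (hmapsG n hz) _ (hmapsG n hw)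
    have hfac : ∀ n, m s (m (e n) s) < 1 := fun n =>
      m_lt_one hs0 hs1 (m_nonneg (he0 n) hs0) (m_lt_one (he0 n) (he1 n) hs0 hs1)
    have hdec : ∀ n, e (n+1) ≤ e n := fun n =>
      (hrec n).trans (mul_le_of_le_one_right (he0 n) (hfac n).le)
    have hanti : Antitone e := antitone_nat_of_succ_le hdec
    have hbdd : BddBelow (range e) := ⟨0, fun x ⟨n, hn⟩ => hn ▸ he0 n⟩
    set l : ℝ := ⨅ n, e n with hldef
    have hlim : Tendsto e atTop (𝓝 l) := tendsto_atTop_ciInf hanti hbdd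
    have hl0 : 0 ≤ l := le_ciInf he0
    have hl1 : l < 1 := lt_of_le_of_lt (ciInf_le hbdd 0) (he1 0)
    -- limit of the recursion
    have hlim1 : Tendsto (fun n => e (n+1)) atTop (𝓝 l) :=
      hlim.comp (tendsto_add_atTop_nat 1)
    have hin : Tendsto (fun n => m (e n) s) atTop (𝓝 (m l s)) := by
      unfold m
      apply Tendsto.div
      · exact hlim.add_const s
      · exact (hlim.mul_const s).const_add 1
      · exact (m_denom_pos hl0 hs0).ne'
    have hout : Tendsto (fun n => e n * m s (m (e n) s)) atTop
        (𝓝 (l * m s (m l s))) := by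
      apply hlim.mul
      unfold m
      apply Tendsto.div
      · exact hin.const_add s
      · exact (hin.const_mul s).const_add 1
      · exact (m_denom_pos hs0 (m_nonneg hl0 hs0)).ne'
    have hle : l ≤ l * m s (m l s) := le_of_tendsto_of_tendsto' hlim1 hout hrec
    have hlzero : l = 0 := by
      by_contra hne
      have hlpos : 0 < l := hl0.lt_of_ne (Ne.symm hne)
      have hm1 : m s (m l s) < 1 :=
        m_lt_one hs0 hs1 (m_nonneg hl0 hs0) (m_lt_one hl0 hl1 hs0 hs1)
      nlinarith
    have hlim0 : Tendsto e atTop (𝓝 0) := hlzero ▸ hlim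
    -- transfer to euclidean distance
    have hdist : ∀ n, dist (comps g n z) (comps g n w) ≤ 2 * e n := by
      intro n
      set u := comps g n z
      set v := comps g n w
      have hu : Complex.abs u < 1 := mem_uDisc.1 (hmapsG n hz)
      have hv : Complex.abs v < 1 := mem_uDisc.1 (hmapsG n hw)
      have hd := den_pos hu hv
      have e1 : dist u v = rho u v * Complex.abs (1 - (starRingEnd ℂ) u * v) := by
        rw [Complex.dist_eq, rho, div_mul_cancel₀ _ hd.ne']; rfl
      have e2 : Complex.abs (1 - (starRingEnd ℂ) u * v) ≤ 2 := by
        calc Complex.abs (1 - (starRingEnd ℂ) u * v)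
            ≤ Complex.abs 1 + Complex.abs ((starRingEnd ℂ) u * v) := by
              simpa [Complex.norm_eq_abs] using norm_sub_le (1:ℂ) ((starRingEnd ℂ) u * v)
          _ ≤ 2 := by
              rw [map_one, map_mul, Complex.abs_conj]
              nlinarith [Complex.abs.nonneg u, Complex.abs.nonneg v]
      calc dist u v = rho u v * Complex.abs (1 - (starRingEnd ℂ) u * v) := e1
        _ ≤ rho u v * 2 := by
            exact mul_le_mul_of_nonneg_left e2 (rho_nonneg _ _)
        _ = 2 * e n := by rw [mul_comm]
    -- pass to the limit along the subsequence
    have hz' : Tendsto (fun j => comps g (σ j) z) atTop (𝓝 (F z)) :=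
      hTLU.tendsto_at hz
    have hw' : Tendsto (fun j => comps g (σ j) w) atTop (𝓝 (F w)) :=
      hTLU.tendsto_at hw
    have h1 : Tendsto (fun j => dist (comps g (σ j) z) (comps g (σ j) w)) atTop
        (𝓝 (dist (F z) (F w))) := hz'.dist hw'
    have h2 : Tendsto (fun j => 2 * e (σ j)) atTop (𝓝 (2 * 0)) :=
      (hlim0.comp hσ.tendsto_atTop).const_mul 2
    rw [mul_zero] at h2
    have hd0 : dist (F z) (F w) ≤ 0 :=
      le_of_tendsto_of_tendsto' h1 h2 (fun j => hdist (σ j))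
    exact dist_le_zero.1 hd0
  have h0 : (0:ℂ) ∈ uDisc := mem_uDisc.2 (by simp)
  exact ⟨F 0, fun z hz => key z hz 0 h0⟩

end StmtAux

open StmtAux
open scoped Topology

/-- uniformly Bloch targets force all IFS limits to be constant. -/
theorem stmt1 (W : ℕ → Set ℂ)
    (hW : ∀ j, IsOpen (W j) ∧ IsConnected (W j) ∧ W j ⊆ uDisc)
    (C : ℝ) (hC : 0 < C)
    (hWC : ∀ j, blochRadiusD (W j) < ENNReal.ofReal C)
    (g : ℕ → ℂ → ℂ)
    (hg : ∀ j, DifferentiableOn ℂ (g j) uDisc ∧ MapsTo (g j) uDisc (W j))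
    (F : ℂ → ℂ) (hF : IFSLimit uDisc g F) :
    ∃ c : ℂ, ∀ z ∈ uDisc, F z = c := by
  obtain ⟨σ, hσ, hTLU⟩ := hF
  set t : ℝ := (Real.exp (2 * C) - 1) / (Real.exp (2 * C) + 1) with htdef
  have hE1 : (1:ℝ) < Real.exp (2 * C) := by
    rw [show (1:ℝ) = Real.exp 0 by simp]
    exact Real.exp_lt_exp.2 (by linarith)
  have ht0 : 0 ≤ t := by
    rw [htdef]
    apply div_nonneg <;> nlinarith
  have ht1 : t < 1 := by
    rw [htdef, div_lt_one (by nlinarith)]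
    nlinarith
  set s : ℝ := Real.sqrt t with hsdef
  have hs0 : 0 ≤ s := Real.sqrt_nonneg t
  have hst : s ^ 2 = t := Real.sq_sqrt ht0
  have hs1 : s < 1 := by nlinarith
  -- uniform contraction step
  have hstep : ∀ j : ℕ, ∀ x ∈ uDisc, ∀ y ∈ uDisc,
      rho (g j x) (g j y) ≤ rho x y * m s (m (rho x y) s) := by
    intro j x hx y hy
    exact step (hW j).2.2 ht0 ht1 (extract hC (hWC j)) (hg j).1 (hg j).2 hx hy
  -- the iterates stay in the disc
  have hmapsG : ∀ n : ℕ, MapsTo (comps g n) uDisc uDisc := by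
    intro n
    induction n with
    | zero => exact fun z hz => (hW 0).2.2 ((hg 0).2 hz)
    | succ n ih => exact fun z hz => (hW (n+1)).2.2 ((hg (n+1)).2 (ih hz))
  -- main convergence statement: F is constant on the disc
  have key : ∀ z ∈ uDisc, ∀ w ∈ uDisc, F z = F w := by
    intro z hz w hw
    set e : ℕ → ℝ := fun n => rho (comps g n z) (comps g n w) with hedef
    have he0 : ∀ n, 0 ≤ e n := fun n => rho_nonneg _ _
    have he1 : ∀ n, e n < 1 := fun n =>
      rho_lt_one (mem_uDisc.1 (hmapsG n hz)) (mem_uDisc.1 (hmapsG n hw))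
    have hrec : ∀ n, e (n+1) ≤ e n * m s (m (e n) s) := by
      intro n
      exact hstep (n+1) _ (hmapsG n hz) _ (hmapsG n hw)
    have hfac : ∀ n, m s (m (e n) s) < 1 := fun n =>
      m_lt_one hs0 hs1 (m_nonneg (he0 n) hs0) (m_lt_one (he0 n) (he1 n) hs0 hs1)
    have hdec : ∀ n, e (n+1) ≤ e n := fun n =>
      (hrec n).trans (mul_le_of_le_one_right (he0 n) (hfac n).le)
    have hanti : Antitone e := antitone_nat_of_succ_le hdec
    have hbdd : BddBelow (range e) := ⟨0, fun x ⟨n, hn⟩ => hn ▸ he0 n⟩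
    set l : ℝ := ⨅ n, e n with hldef
    have hlim : Tendsto e atTop (𝓝 l) := tendsto_atTop_ciInf hanti hbdd
    have hl0 : 0 ≤ l := le_ciInf he0
    have hl1 : l < 1 := lt_of_le_of_lt (ciInf_le hbdd 0) (he1 0)
    -- limit of the recursion
    have hlim1 : Tendsto (fun n => e (n+1)) atTop (𝓝 l) :=
      hlim.comp (tendsto_add_atTop_nat 1)
    have hin : Tendsto (fun n => m (e n) s) atTop (𝓝 (m l s)) := by
      unfold m
      apply Tendsto.div
      · exact hlim.add_const s
      · exact (hlim.mul_const s).const_add 1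
      · exact (m_denom_pos hl0 hs0).ne'
    have hout : Tendsto (fun n => e n * m s (m (e n) s)) atTop
        (𝓝 (l * m s (m l s))) := by
      apply hlim.mul
      unfold m
      apply Tendsto.div
      · exact hin.const_add s
      · exact (hin.const_mul s).const_add 1
      · exact (m_denom_pos hs0 (m_nonneg hl0 hs0)).ne'
    have hle : l ≤ l * m s (m l s) := le_of_tendsto_of_tendsto' hlim1 hout hrec
    have hlzero : l = 0 := by
      by_contra hne
      have hlpos : 0 < l := hl0.lt_of_ne (Ne.symm hne)
      have hm1 : m s (m l s) < 1 :=
        m_lt_one hs0 hs1 (m_nonneg hl0 hs0) (m_lt_one hl0 hl1 hs0 hs1)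
      nlinarith
    have hlim0 : Tendsto e atTop (𝓝 0) := hlzero ▸ hlim
    -- transfer to euclidean distance
    have hdist : ∀ n, dist (comps g n z) (comps g n w) ≤ 2 * e n := by
      intro n
      set u := comps g n z
      set v := comps g n w
      have hu : Complex.abs u < 1 := mem_uDisc.1 (hmapsG n hz)
      have hv : Complex.abs v < 1 := mem_uDisc.1 (hmapsG n hw)
      have hd := den_pos hu hv
      have e1 : dist u v = rho u v * Complex.abs (1 - (starRingEnd ℂ) u * v) := by
        rw [Complex.dist_eq, rho, div_mul_cancel₀ _ hd.ne']; rfl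
      have e2 : Complex.abs (1 - (starRingEnd ℂ) u * v) ≤ 2 := by
        calc Complex.abs (1 - (starRingEnd ℂ) u * v)
            ≤ Complex.abs 1 + Complex.abs ((starRingEnd ℂ) u * v) := by
              simpa [Complex.norm_eq_abs] using norm_sub_le (1:ℂ) ((starRingEnd ℂ) u * v)
          _ ≤ 2 := by
              rw [map_one, map_mul, Complex.abs_conj]
              nlinarith [Complex.abs.nonneg u, Complex.abs.nonneg v]
      calc dist u v = rho u v * Complex.abs (1 - (starRingEnd ℂ) u * v) := e1
        _ ≤ rho u v * 2 := by
            exact mul_le_mul_of_nonneg_left e2 (rho_nonneg _ _)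
        _ = 2 * e n := by rw [mul_comm]
    -- pass to the limit along the subsequence
    have hz' : Tendsto (fun j => comps g (σ j) z) atTop (𝓝 (F z)) :=
      hTLU.tendsto_at hz
    have hw' : Tendsto (fun j => comps g (σ j) w) atTop (𝓝 (F w)) :=
      hTLU.tendsto_at hw
    have h1 : Tendsto (fun j => dist (comps g (σ j) z) (comps g (σ j) w)) atTop
        (𝓝 (dist (F z) (F w))) := hz'.dist hw'
    have h2 : Tendsto (fun j => 2 * e (σ j)) atTop (𝓝 (2 * 0)) :=
      (hlim0.comp hσ.tendsto_atTop).const_mul 2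
    rw [mul_zero] at h2
    have hd0 : dist (F z) (F w) ≤ 0 :=
      le_of_tendsto_of_tendsto' h1 h2 (fun j => hdist (σ j))
    exact dist_le_zero.1 hd0
  have h0 : (0:ℂ) ∈ uDisc := mem_uDisc.2 (by simp)
  exact ⟨F 0, fun z hz => key z hz 0 h0⟩
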